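/- (Constancy Augmentation, semantic form.) Let M be a set, rk a diversity rank function on M, and u, x, y finite subsets of M. If u ⊥ u and x ⊥ y hold under rk, then (x ∪ u) ⊥ y holds under rk, i.e., if rk(u) + rk(u) = rk(u) and rk(x ∪ y) = rk(x) + rk(y), then rk(x ∪ u ∪ y) = rk(x ∪ u) + rk(y). -/
import Mathlib

/-- `rk` is a diversity rank function: it maps finite sets to nonnegative reals and
satisfies axioms R1--R4. -/
def IsDivRank {α : Type*} [DecidableEq α] (rk : Finset α → ℝ) : Prop :=
  (∀ x : Finset α, 0 ≤ rk x) ∧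
  rk ∅ = 0 ∧
  (∀ x y : Finset α, rk x ≤ rk (x ∪ y) ∧ rk (x ∪ y) ≤ rk x + rk y) ∧
  (∀ x y z : Finset α, rk (x ∪ y) = rk x → rk (x ∪ y ∪ z) = rk (x ∪ z)) ∧
  (∀ x y z : Finset α, rk (x ∪ y ∪ z) = rk x + rk (y ∪ z) → rk (x ∪ y) = rk x + rk y)

/-- Constancy Augmentation: if `u ⊥ u` and `x ⊥ y` then `(x ∪ u) ⊥ y`. -/
theorem constancy_augmentation {α : Type*} [DecidableEq α] (rk : Finset α → ℝ)
    (h : IsDivRank rk) (u x y : Finset α)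
    (huu : rk u + rk u = rk u)
    (hxy : rk (x ∪ y) = rk x + rk y) :
    rk (x ∪ u ∪ y) = rk (x ∪ u) + rk y := by
  obtain ⟨hpos, hempty, hR2, hR3, hR4⟩ := h
  have hu0 : rk u = 0 := by linarith
  have hxu : rk (x ∪ u) = rk x := by
    have h1 := (hR2 x u).1
    have h2 := (hR2 x u).2
    linarith
  have := hR3 x u y hxu
  rw [this, hxy, hxu]
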